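/- If Q_n = a·(10^m − 1)/9 for some a ∈ {1, 2, …, 9} and some positive integer m, then n ∈ {0, 1, 2}. -/
import Mathlib

set_option maxRecDepth 100000


/-- The Pell–Lucas sequence: `Q 0 = 2`, `Q 1 = 2`, `Q (n+2) = 2 * Q (n+1) + Q n`. -/
def pellLucas : ℕ → ℕ
  | 0 => 2
  | 1 => 2
  | n + 2 => 2 * pellLucas (n + 1) + pellLucas n

/-- One step of the Pell–Lucas recurrence modulo 1000, on consecutive pairs. -/
def plStep (p : ℕ × ℕ) : ℕ × ℕ := (p.2, (2 * p.2 + p.1) % 1000)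

/-- `plF n = (Q n % 1000, Q (n+1) % 1000)`. -/
def plF (n : ℕ) : ℕ × ℕ := plStep^[n] (2, 2)

lemma plF_spec : ∀ n, plF n = (pellLucas n % 1000, pellLucas (n + 1) % 1000) := by
  intro n
  induction n with
  | zero => simp [plF, pellLucas]
  | succ k ih =>
    have : plF (k + 1) = plStep (plF k) := by
      simp [plF, Function.iterate_succ_apply']
    rw [this, ih]
    simp only [plStep, pellLucas]
    refine Prod.ext rfl ?_
    simp [Nat.mul_mod, Nat.add_mod]

lemma plF_period (n : ℕ) : plF (n + 300) = plF n := by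
  have h300 : plF 300 = (2, 2) := by decide
  have : plF (n + 300) = plStep^[n] (plF 300) := by
    simp [plF, Function.iterate_add_apply]
  rw [this, h300]; rfl

lemma plF_mod (n : ℕ) : plF n = plF (n % 300) := by
  induction n using Nat.strong_induction_on with
  | _ n ih =>
    by_cases h : n < 300
    · rw [Nat.mod_eq_of_lt h]
    · have h1 : n = (n - 300) + 300 := by omega
      rw [h1, plF_period, ih (n - 300) (by omega)]
      congr 1
      omega

lemma plF_not_dvd : ∀ i < 300, ¬ (111 ∣ (plF i).1) := by decide

/-- `rep m` is the repunit with `m` ones. -/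
def rep : ℕ → ℕ
  | 0 => 0
  | m + 1 => 10 * rep m + 1

lemma rep_mul : ∀ m, 9 * rep m + 1 = 10 ^ m := by
  intro m
  induction m with
  | zero => simp [rep]
  | succ k ih => simp [rep, pow_succ]; omega

lemma rep_eq (m : ℕ) : (10 ^ m - 1) / 9 = rep m := by
  have := rep_mul m
  omega

lemma rep_mod (m : ℕ) : rep (m + 3) % 1000 = 111 := by
  simp [rep]
  omega

lemma pl_mono : ∀ n, pellLucas n ≤ pellLucas (n + 1) := by
  intro n
  match n with
  | 0 => simp [pellLucas]
  | k + 1 =>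
    show pellLucas (k + 1) ≤ pellLucas (k + 2)
    simp only [pellLucas]
    omega

lemma pl_ge (n : ℕ) (hn : 6 ≤ n) : 198 ≤ pellLucas n := by
  have : pellLucas 6 ≤ pellLucas n := monotone_nat_of_le_succ pl_mono hn
  have h6 : pellLucas 6 = 198 := by decide
  omega

lemma pl_key (n a : ℕ) (ha1 : 1 ≤ a) (ha9 : a ≤ 9) :
    pellLucas n % 1000 ≠ 111 * a := by
  intro h
  have h1 := plF_spec n
  have h2 : (plF n).1 = pellLucas n % 1000 := by rw [h1]
  have h3 : (plF (n % 300)).1 = 111 * a := by rw [← plF_mod, h2, h]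
  have h4 := plF_not_dvd (n % 300) (Nat.mod_lt _ (by norm_num))
  exact h4 ⟨a, h3⟩

/-- If `Q_n = a·(10^m − 1)/9` for some `a ∈ {1, …, 9}` and some positive
integer `m`, then `n ∈ {0, 1, 2}`. -/
theorem pellLucas_repdigit (n m a : ℕ) (hm : 0 < m) (ha1 : 1 ≤ a) (ha9 : a ≤ 9)
    (h : pellLucas n = a * ((10 ^ m - 1) / 9)) :
    n = 0 ∨ n = 1 ∨ n = 2 := by
  rw [rep_eq] at h
  by_cases hm3 : 3 ≤ m
  · exfalso
    obtain ⟨k, rfl⟩ : ∃ k, m = k + 3 := ⟨m - 3, by omega⟩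
    have hmod : pellLucas n % 1000 = 111 * a := by
      rw [h, Nat.mul_mod, rep_mod]
      have : a % 1000 = a := Nat.mod_eq_of_lt (by omega)
      rw [this]
      rw [Nat.mod_eq_of_lt (by omega)]
      ring
    exact pl_key n a ha1 ha9 hmod
  · -- m = 1 or m = 2, so pellLucas n ≤ 99
    have hrep : rep m = 1 ∨ rep m = 11 := by
      interval_cases m
      · left; rfl
      · right; rfl
    have hsmall : pellLucas n ≤ 99 := by
      rcases hrep with h1 | h1 <;> rw [h1] at h <;> omega
    have hn6 : n < 6 := by
      by_contra hc
      have := pl_ge n (by omega)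
      omega
    interval_cases n
    · left; rfl
    · right; left; rfl
    · right; right; rfl
    · exfalso
      have h3 : pellLucas 3 = 14 := by decide
      rw [h3] at h
      rcases hrep with h1 | h1 <;> rw [h1] at h <;> omega
    · exfalso
      have h4 : pellLucas 4 = 34 := by decide
      rw [h4] at h
      rcases hrep with h1 | h1 <;> rw [h1] at h <;> omega
    · exfalso
      have h5 : pellLucas 5 = 82 := by decide
      rw [h5] at h
      rcases hrep with h1 | h1 <;> rw [h1] at h <;> omega
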